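/- Let (Σ, σ) be an ME coupling of countable groups Γ with Λ, and (Σ', σ') an ME coupling of Λ with Δ. Consider the commuting measure-preserving actions on (Σ × Σ', σ × σ') given by γ : (x, y) ↦ (γx, y), δ : (x, y) ↦ (x, yδ), and λ : (x, y) ↦ (xλ, λ⁻¹y). Let Y ⊆ Σ be a strict fundamental domain for the left Γ-action on Σ, with induced right Λ-action y·λ, and let Z ⊆ Σ' be a strict fundamental domain for the right Δ-action on Σ', with induced left Λ-action λ·z. Then the combined Γ × Λ × Δ action on (Σ × Σ', σ × σ') is ergodic (every measurable subset invariant under all three actions is null or conull) if and only if the diagonal Λ-action λ : (y, z) ↦ (y·λ, λ⁻¹·z) on (Y × Z, σ|_Y × σ'|_Z) is ergodic. -/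

import Mathlib

open MeasureTheory Filter Topology

/-- `X` is a measurable fundamental domain of finite measure for the action of `G` on `Ω`
given by the family of maps `T g : Ω → Ω`: the translates of `X` cover `Ω` up to a null set
and pairwise intersect in null sets. -/
def IsFundDom {G Ω : Type} [Group G] [MeasurableSpace Ω]
    (T : G → Ω → Ω) (m : Measure Ω) (X : Set Ω) : Prop :=
  MeasurableSet X ∧ (∀ᵐ ω ∂m, ∃ g : G, T g ω ∈ X) ∧
    (∀ g : G, g ≠ 1 → m (X ∩ T g ⁻¹' X) = 0) ∧ m X ≠ ⊤

/-- `(Ω, m)` together with the left action `L` of `Γ` and the right action `R` of `Λ`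
is a Measure Equivalence coupling of `Γ` with `Λ`: the measure is σ-finite, the two
measure-preserving actions commute, are essentially free, and each admits a measurable
fundamental domain of finite measure. -/
structure IsMECoupling {Γ Λ Ω : Type} [Group Γ] [Group Λ] [MeasurableSpace Ω]
    (m : Measure Ω) (L : Γ → Ω → Ω) (R : Λ → Ω → Ω) : Prop where
  sigmaFinite : SigmaFinite m
  L_one : ∀ ω, L 1 ω = ω
  L_mul : ∀ γ₁ γ₂ ω, L (γ₁ * γ₂) ω = L γ₁ (L γ₂ ω)
  R_one : ∀ ω, R 1 ω = ω
  R_mul : ∀ l₁ l₂ ω, R (l₁ * l₂) ω = R l₂ (R l₁ ω)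
  actions_comm : ∀ γ l ω, L γ (R l ω) = R l (L γ ω)
  L_mp : ∀ γ, MeasurePreserving (L γ) m m
  R_mp : ∀ l, MeasurePreserving (R l) m m
  L_essFree : ∀ γ : Γ, γ ≠ 1 → m {ω | L γ ω = ω} = 0
  R_essFree : ∀ l : Λ, l ≠ 1 → m {ω | R l ω = ω} = 0
  fund_L : ∃ Y : Set Ω, IsFundDom L m Y
  fund_R : ∃ X : Set Ω, IsFundDom R m X

/-- The action of `G` given by the maps `T g` on the measure `μ` is ergodic: every measurable
set which is almost everywhere invariant under every group element is null or conull. -/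
def AEErgodicOn {G S : Type} [Group G] [MeasurableSpace S]
    (T : G → S → S) (μ : Measure S) : Prop :=
  ∀ A : Set S, MeasurableSet A →
    (∀ g : G, μ (symmDiff A (T g ⁻¹' A)) = 0) → μ A = 0 ∨ μ Aᶜ = 0

/-- Let `(Σ, σ)` be an ME coupling of `Γ` with `Λ` and `(Σ', σ')` an ME
coupling of `Λ` with `Δ`.  Consider on `(Σ × Σ', σ × σ')` the commuting actions
`γ : (x,y) ↦ (γx, y)`, `δ : (x,y) ↦ (x, yδ)` and `λ : (x,y) ↦ (xλ, λ⁻¹y)`.  Let `Y ⊆ Σ` be a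
strict fundamental domain for the `Γ`-action with induced right `Λ`-action
`y·λ = β(y,λ)⁻¹(yλ)`, and `Z ⊆ Σ'` a strict fundamental domain for the `Δ`-action with
induced left `Λ`-action `λ·z = (λz)·c(z,λ)`.  Then the combined `Γ × Λ × Δ`-action on the
product is ergodic if and only if the diagonal `Λ`-action `λ : (y,z) ↦ (y·λ, λ⁻¹·z)` on
`(Y × Z, σ|_Y × σ'|_Z)` is ergodic. -/
theorem product_ergodic_iff_diagonal_ergodic
    {Γ Λ Δ : Type} [Group Γ] [Countable Γ] [Group Λ] [Countable Λ] [Group Δ] [Countable Δ]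
    {S : Type} [MeasurableSpace S] (σ : Measure S) [SigmaFinite σ]
    (LΓ : Γ → S → S) (RΛ : Λ → S → S) (h : IsMECoupling σ LΓ RΛ)
    {S' : Type} [MeasurableSpace S'] (σ' : Measure S') [SigmaFinite σ']
    (LΛ : Λ → S' → S') (RΔ : Δ → S' → S') (h' : IsMECoupling σ' LΛ RΔ)
    (Y : Set S) (hYm : MeasurableSet Y)
    (hY : ∀ s : S, ∃! y, y ∈ Y ∧ ∃ γ : Γ, LΓ γ s = y)
    (β : S → Λ → Γ) (hβ : ∀ y ∈ Y, ∀ lam : Λ, LΓ (β y lam)⁻¹ (RΛ lam y) ∈ Y)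
    (Z : Set S') (hZm : MeasurableSet Z)
    (hZ : ∀ s : S', ∃! z, z ∈ Z ∧ ∃ δ : Δ, RΔ δ s = z)
    (c : S' → Λ → Δ) (hc : ∀ z ∈ Z, ∀ lam : Λ, RΔ (c z lam) (LΛ lam z) ∈ Z) :
    (∀ A : Set (S × S'), MeasurableSet A →
        (∀ γ : Γ, (σ.prod σ') (symmDiff A ((fun p : S × S' => (LΓ γ p.1, p.2)) ⁻¹' A)) = 0) →
        (∀ δ : Δ, (σ.prod σ') (symmDiff A ((fun p : S × S' => (p.1, RΔ δ p.2)) ⁻¹' A)) = 0) →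
        (∀ lam : Λ,
          (σ.prod σ')
            (symmDiff A ((fun p : S × S' => (RΛ lam p.1, LΛ lam⁻¹ p.2)) ⁻¹' A)) = 0) →
        (σ.prod σ') A = 0 ∨ (σ.prod σ') Aᶜ = 0) ↔
      AEErgodicOn
        (fun (lam : Λ) (p : S × S') =>
          (LΓ (β p.1 lam)⁻¹ (RΛ lam p.1), RΔ (c p.2 lam⁻¹) (LΛ lam⁻¹ p.2)))
        ((σ.restrict Y).prod (σ'.restrict Z)) := by
  classical
  set μ : Measure (S × S') := σ.prod σ' with hμdef
  have hWm : MeasurableSet (Y ×ˢ Z) := hYm.prod hZm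
  have hν : (σ.restrict Y).prod (σ'.restrict Z) = μ.restrict (Y ×ˢ Z) :=
    Measure.prod_restrict Y Z
  have hFmp : ∀ (γ : Γ) (δ : Δ),
      MeasurePreserving (fun p : S × S' => (LΓ γ p.1, RΔ δ p.2)) μ μ :=
    fun γ δ => (h.L_mp γ).prod (h'.R_mp δ)
  have hTlmp : ∀ lam : Λ,
      MeasurePreserving (fun p : S × S' => (RΛ lam p.1, LΛ lam⁻¹ p.2)) μ μ :=
    fun lam => (h.R_mp lam).prod (h'.L_mp lam⁻¹)
  have uniqY : ∀ s y₁ y₂ : S, y₁ ∈ Y → y₂ ∈ Y → (∃ γ, LΓ γ s = y₁) →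
      (∃ γ, LΓ γ s = y₂) → y₁ = y₂ := fun s y₁ y₂ h₁ h₂ e₁ e₂ =>
    (hY s).unique ⟨h₁, e₁⟩ ⟨h₂, e₂⟩
  have uniqZ : ∀ s z₁ z₂ : S', z₁ ∈ Z → z₂ ∈ Z → (∃ δ, RΔ δ s = z₁) →
      (∃ δ, RΔ δ s = z₂) → z₁ = z₂ := fun s z₁ z₂ h₁ h₂ e₁ e₂ =>
    (hZ s).unique ⟨h₁, e₁⟩ ⟨h₂, e₂⟩
  have hTdW : ∀ (lam : Λ) (p : S × S'), p ∈ Y ×ˢ Z →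
      (LΓ (β p.1 lam)⁻¹ (RΛ lam p.1), RΔ (c p.2 lam⁻¹) (LΛ lam⁻¹ p.2)) ∈ Y ×ˢ Z :=
    fun lam p hp => ⟨hβ p.1 hp.1 lam, hc p.2 hp.2 lam⁻¹⟩
  -- a set a.e.-invariant under the Γ×Δ-action which is null on Y ×ˢ Z is null
  have hAENull : ∀ D : Set (S × S'), MeasurableSet D →
      (∀ (γ : Γ) (δ : Δ),
        μ (symmDiff D ((fun p : S × S' => (LΓ γ p.1, RΔ δ p.2)) ⁻¹' D)) = 0) →
      μ (D ∩ Y ×ˢ Z) = 0 → μ D = 0 := by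
    intro D hDm hDinv hDW
    have hcover : D ⊆ ⋃ gd : Γ × Δ,
        (D ∩ (fun p : S × S' => (LΓ gd.1 p.1, RΔ gd.2 p.2)) ⁻¹' (Y ×ˢ Z)) := by
      intro p hp
      obtain ⟨y, ⟨hyY, γ, hγ⟩, -⟩ := hY p.1
      obtain ⟨z, ⟨hzZ, δ, hδ⟩, -⟩ := hZ p.2
      exact Set.mem_iUnion.2 ⟨(γ, δ), hp, by
        simp only [Set.mem_preimage]
        exact ⟨by rw [hγ]; exact hyY, by rw [hδ]; exact hzZ⟩⟩
    refine le_antisymm ?_ zero_le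
    calc μ D ≤ μ (⋃ gd : Γ × Δ,
          (D ∩ (fun p : S × S' => (LΓ gd.1 p.1, RΔ gd.2 p.2)) ⁻¹' (Y ×ˢ Z))) :=
        measure_mono hcover
      _ ≤ ∑' gd : Γ × Δ,
          μ (D ∩ (fun p : S × S' => (LΓ gd.1 p.1, RΔ gd.2 p.2)) ⁻¹' (Y ×ˢ Z)) :=
        measure_iUnion_le _
      _ = 0 := by
        refine ENNReal.tsum_eq_zero.2 fun gd => ?_
        have hsub : D ∩ (fun p : S × S' => (LΓ gd.1 p.1, RΔ gd.2 p.2)) ⁻¹' (Y ×ˢ Z) ⊆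
            symmDiff D ((fun p : S × S' => (LΓ gd.1 p.1, RΔ gd.2 p.2)) ⁻¹' D) ∪
              (fun p : S × S' => (LΓ gd.1 p.1, RΔ gd.2 p.2)) ⁻¹' (D ∩ Y ×ˢ Z) := by
          rintro p ⟨hpD, hpW⟩
          by_cases hF : (LΓ gd.1 p.1, RΔ gd.2 p.2) ∈ D
          · exact Or.inr ⟨hF, hpW⟩
          · exact Or.inl (Set.mem_symmDiff.2 (Or.inl ⟨hpD, hF⟩))
        refine le_antisymm ?_ zero_le
        calc μ (D ∩ (fun p : S × S' => (LΓ gd.1 p.1, RΔ gd.2 p.2)) ⁻¹' (Y ×ˢ Z))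
            ≤ μ (symmDiff D ((fun p : S × S' => (LΓ gd.1 p.1, RΔ gd.2 p.2)) ⁻¹' D)) +
              μ ((fun p : S × S' => (LΓ gd.1 p.1, RΔ gd.2 p.2)) ⁻¹' (D ∩ Y ×ˢ Z)) :=
            le_trans (measure_mono hsub) (measure_union_le _ _)
          _ = 0 := by
            rw [hDinv gd.1 gd.2,
              (hFmp gd.1 gd.2).measure_preimage (hDm.inter hWm).nullMeasurableSet,
              hDW, add_zero]
  constructor
  · -- product ergodic → diagonal ergodic
    intro H B hBm hBinv
    set A : Set (S × S') := ⋃ gd : Γ × Δ,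
      (fun p : S × S' => (LΓ gd.1 p.1, RΔ gd.2 p.2)) ⁻¹' (B ∩ Y ×ˢ Z) with hAdef
    have hAm : MeasurableSet A := MeasurableSet.iUnion fun gd =>
      (hFmp gd.1 gd.2).measurable (hBm.inter hWm)
    have hAmem : ∀ p : S × S', p ∈ A ↔
        ∃ (γ : Γ) (δ : Δ), (LΓ γ p.1, RΔ δ p.2) ∈ B ∩ Y ×ˢ Z := by
      intro p
      simp only [hAdef, Set.mem_iUnion, Set.mem_preimage, Prod.exists]
    have hAW : ∀ p : S × S', p ∈ Y ×ˢ Z → (p ∈ A ↔ p ∈ B) := by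
      rintro ⟨x, x'⟩ ⟨hx, hx'⟩
      rw [hAmem]
      constructor
      · rintro ⟨γ, δ, hmB, hy, hz⟩
        have e1 : LΓ γ x = x := uniqY x _ _ hy hx ⟨γ, rfl⟩ ⟨1, h.L_one x⟩
        have e2 : RΔ δ x' = x' := uniqZ x' _ _ hz hx' ⟨δ, rfl⟩ ⟨1, h'.R_one x'⟩
        rwa [e1, e2] at hmB
      · intro hB
        refine ⟨1, 1, ?_⟩
        rw [h.L_one, h'.R_one]
        exact ⟨hB, hx, hx'⟩
    have hAinv : ∀ (γ₀ : Γ) (δ₀ : Δ),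
        (fun p : S × S' => (LΓ γ₀ p.1, RΔ δ₀ p.2)) ⁻¹' A = A := by
      intro γ₀ δ₀
      ext p
      simp only [Set.mem_preimage]
      rw [hAmem, hAmem]
      constructor
      · rintro ⟨γ, δ, hm⟩
        refine ⟨γ * γ₀, δ₀ * δ, ?_⟩
        rw [h.L_mul, h'.R_mul]
        exact hm
      · rintro ⟨γ, δ, hm⟩
        refine ⟨γ * γ₀⁻¹, δ₀⁻¹ * δ, ?_⟩
        rw [← h.L_mul, ← h'.R_mul, inv_mul_cancel_right, mul_inv_cancel_left]
        exact hm
    have hγA : ∀ γ : Γ, μ (symmDiff A ((fun p : S × S' => (LΓ γ p.1, p.2)) ⁻¹' A)) = 0 := by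
      intro γ
      have e : (fun p : S × S' => (LΓ γ p.1, p.2)) =
          (fun p : S × S' => (LΓ γ p.1, RΔ (1 : Δ) p.2)) := by
        funext p; rw [h'.R_one]
      rw [e, hAinv γ 1, symmDiff_self]
      simp
    have hδA : ∀ δ : Δ, μ (symmDiff A ((fun p : S × S' => (p.1, RΔ δ p.2)) ⁻¹' A)) = 0 := by
      intro δ
      have e : (fun p : S × S' => (p.1, RΔ δ p.2)) =
          (fun p : S × S' => (LΓ (1 : Γ) p.1, RΔ δ p.2)) := by
        funext p; rw [h.L_one]
      rw [e, hAinv 1 δ, symmDiff_self]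
      simp
    have keyTl : ∀ (lam : Λ) (p : S × S'), p ∈ Y ×ˢ Z →
        ((RΛ lam p.1, LΛ lam⁻¹ p.2) ∈ A ↔
          (LΓ (β p.1 lam)⁻¹ (RΛ lam p.1), RΔ (c p.2 lam⁻¹) (LΛ lam⁻¹ p.2)) ∈ B ∩ Y ×ˢ Z) := by
      rintro lam ⟨x, x'⟩ ⟨hx, hx'⟩
      rw [hAmem]
      constructor
      · rintro ⟨γ, δ, hmB, hy, hz⟩
        have e1 : LΓ γ (RΛ lam x) = LΓ (β x lam)⁻¹ (RΛ lam x) :=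
          uniqY _ _ _ hy (hβ x hx lam) ⟨γ, rfl⟩ ⟨(β x lam)⁻¹, rfl⟩
        have e2 : RΔ δ (LΛ lam⁻¹ x') = RΔ (c x' lam⁻¹) (LΛ lam⁻¹ x') :=
          uniqZ _ _ _ hz (hc x' hx' lam⁻¹) ⟨δ, rfl⟩ ⟨c x' lam⁻¹, rfl⟩
        rw [← e1, ← e2]
        exact ⟨hmB, hy, hz⟩
      · intro hm
        exact ⟨(β x lam)⁻¹, c x' lam⁻¹, hm⟩
    have hlamA : ∀ lam : Λ,
        μ (symmDiff A ((fun p : S × S' => (RΛ lam p.1, LΛ lam⁻¹ p.2)) ⁻¹' A)) = 0 := by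
      intro lam
      have hDm : MeasurableSet
          (symmDiff A ((fun p : S × S' => (RΛ lam p.1, LΛ lam⁻¹ p.2)) ⁻¹' A)) :=
        hAm.symmDiff ((hTlmp lam).measurable hAm)
      refine hAENull _ hDm ?_ ?_
      · intro γ δ
        have hFAiff : ∀ q : S × S', (LΓ γ q.1, RΔ δ q.2) ∈ A ↔ q ∈ A := fun q =>
          Set.ext_iff.1 (hAinv γ δ) q
        have hpre : (fun p : S × S' => (LΓ γ p.1, RΔ δ p.2)) ⁻¹'
            (symmDiff A ((fun p : S × S' => (RΛ lam p.1, LΛ lam⁻¹ p.2)) ⁻¹' A)) =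
            symmDiff A ((fun p : S × S' => (RΛ lam p.1, LΛ lam⁻¹ p.2)) ⁻¹' A) := by
          ext p
          simp only [Set.mem_preimage, Set.mem_symmDiff]
          have hcomm : (RΛ lam (LΓ γ p.1), LΛ lam⁻¹ (RΔ δ p.2)) =
              (LΓ γ (RΛ lam p.1), RΔ δ (LΛ lam⁻¹ p.2)) := by
            rw [Prod.mk.injEq]
            exact ⟨(h.actions_comm γ lam p.1).symm, h'.actions_comm lam⁻¹ δ p.2⟩
          rw [hcomm, hFAiff p, hFAiff (RΛ lam p.1, LΛ lam⁻¹ p.2)]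
        rw [hpre, symmDiff_self]
        simp
      · have hDWiff : ∀ p : S × S', p ∈ Y ×ˢ Z →
            (p ∈ symmDiff A ((fun p : S × S' => (RΛ lam p.1, LΛ lam⁻¹ p.2)) ⁻¹' A) ↔
             p ∈ symmDiff B ((fun p : S × S' =>
              (LΓ (β p.1 lam)⁻¹ (RΛ lam p.1), RΔ (c p.2 lam⁻¹) (LΛ lam⁻¹ p.2))) ⁻¹' B)) := by
          intro p hp
          have h1 : p ∈ A ↔ p ∈ B := hAW p hp
          have h2 : (RΛ lam p.1, LΛ lam⁻¹ p.2) ∈ A ↔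
              (LΓ (β p.1 lam)⁻¹ (RΛ lam p.1), RΔ (c p.2 lam⁻¹) (LΛ lam⁻¹ p.2)) ∈ B := by
            rw [keyTl lam p hp]
            exact ⟨fun hq => hq.1, fun hq => ⟨hq, hTdW lam p hp⟩⟩
          simp only [Set.mem_symmDiff, Set.mem_preimage]
          tauto
        have hset : symmDiff A ((fun p : S × S' => (RΛ lam p.1, LΛ lam⁻¹ p.2)) ⁻¹' A)
            ∩ Y ×ˢ Z =
            symmDiff B ((fun p : S × S' =>
              (LΓ (β p.1 lam)⁻¹ (RΛ lam p.1), RΔ (c p.2 lam⁻¹) (LΛ lam⁻¹ p.2))) ⁻¹' B)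
            ∩ Y ×ˢ Z := by
          ext p
          simp only [Set.mem_inter_iff]
          exact and_congr_left fun hp => hDWiff p hp
        rw [hset, ← Measure.restrict_apply' hWm, ← hν]
        exact hBinv lam
    rcases H A hAm hγA hδA hlamA with hA0 | hAc0
    · left
      rw [hν, Measure.restrict_apply' hWm]
      exact measure_mono_null (fun p hp => (hAW p hp.2).2 hp.1) hA0
    · right
      rw [hν, Measure.restrict_apply' hWm]
      exact measure_mono_null
        (fun p hp hpA => hp.1 ((hAW p hp.2).1 hpA)) hAc0
  · -- diagonal ergodic → product ergodic
    intro Erg A hAm hγinv hδinv hlinv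
    have hRdmp : ∀ δ : Δ, MeasurePreserving (fun p : S × S' => (p.1, RΔ δ p.2)) μ μ :=
      fun δ => (MeasurePreserving.id σ).prod (h'.R_mp δ)
    have hLgm : ∀ γ : Γ, Measurable (fun p : S × S' => (LΓ γ p.1, p.2)) :=
      fun γ => ((h.L_mp γ).prod (MeasurePreserving.id σ')).measurable
    have hFA : ∀ (γ : Γ) (δ : Δ),
        μ (symmDiff A ((fun p : S × S' => (LΓ γ p.1, RΔ δ p.2)) ⁻¹' A)) = 0 := by
      intro γ δ
      have hcomp : (fun p : S × S' => (LΓ γ p.1, RΔ δ p.2)) ⁻¹' A =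
          (fun p : S × S' => (p.1, RΔ δ p.2)) ⁻¹'
            ((fun p : S × S' => (LΓ γ p.1, p.2)) ⁻¹' A) := rfl
      have tri : symmDiff A ((fun p : S × S' => (LΓ γ p.1, RΔ δ p.2)) ⁻¹' A) ⊆
          symmDiff A ((fun p : S × S' => (p.1, RΔ δ p.2)) ⁻¹' A) ∪
          symmDiff ((fun p : S × S' => (p.1, RΔ δ p.2)) ⁻¹' A)
            ((fun p : S × S' => (LΓ γ p.1, RΔ δ p.2)) ⁻¹' A) :=
        symmDiff_triangle A _ _
      have h2 : symmDiff ((fun p : S × S' => (p.1, RΔ δ p.2)) ⁻¹' A)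
          ((fun p : S × S' => (LΓ γ p.1, RΔ δ p.2)) ⁻¹' A) =
          (fun p : S × S' => (p.1, RΔ δ p.2)) ⁻¹'
            (symmDiff A ((fun p : S × S' => (LΓ γ p.1, p.2)) ⁻¹' A)) := by
        rw [Set.preimage_symmDiff, hcomp]
      refine le_antisymm ?_ zero_le
      calc μ (symmDiff A ((fun p : S × S' => (LΓ γ p.1, RΔ δ p.2)) ⁻¹' A))
          ≤ μ (symmDiff A ((fun p : S × S' => (p.1, RΔ δ p.2)) ⁻¹' A)) +
            μ (symmDiff ((fun p : S × S' => (p.1, RΔ δ p.2)) ⁻¹' A)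
              ((fun p : S × S' => (LΓ γ p.1, RΔ δ p.2)) ⁻¹' A)) :=
          le_trans (measure_mono tri) (measure_union_le _ _)
        _ = 0 := by
          rw [hδinv δ, h2,
            (hRdmp δ).measure_preimage (hAm.symmDiff (hLgm γ hAm)).nullMeasurableSet,
            hγinv γ, add_zero]
    have hBm : MeasurableSet (A ∩ Y ×ˢ Z) := hAm.inter hWm
    have hBinv : ∀ lam : Λ, (σ.restrict Y).prod (σ'.restrict Z)
        (symmDiff (A ∩ Y ×ˢ Z) ((fun p : S × S' =>
          (LΓ (β p.1 lam)⁻¹ (RΛ lam p.1), RΔ (c p.2 lam⁻¹) (LΛ lam⁻¹ p.2))) ⁻¹'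
            (A ∩ Y ×ˢ Z))) = 0 := by
      intro lam
      rw [hν, Measure.restrict_apply' hWm]
      have hstep1 : symmDiff (A ∩ Y ×ˢ Z) ((fun p : S × S' =>
            (LΓ (β p.1 lam)⁻¹ (RΛ lam p.1), RΔ (c p.2 lam⁻¹) (LΛ lam⁻¹ p.2))) ⁻¹'
              (A ∩ Y ×ˢ Z)) ∩ Y ×ˢ Z =
          symmDiff A ((fun p : S × S' =>
            (LΓ (β p.1 lam)⁻¹ (RΛ lam p.1), RΔ (c p.2 lam⁻¹) (LΛ lam⁻¹ p.2))) ⁻¹' A)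
            ∩ Y ×ˢ Z := by
        ext p
        simp only [Set.mem_inter_iff, Set.mem_symmDiff, Set.mem_preimage,
          Set.mem_inter_iff]
        constructor
        · rintro ⟨hd, hpW⟩
          refine ⟨?_, hpW⟩
          have hT := hTdW lam p hpW
          tauto
        · rintro ⟨hd, hpW⟩
          refine ⟨?_, hpW⟩
          have hT := hTdW lam p hpW
          tauto
      have hstep2 : symmDiff A ((fun p : S × S' =>
            (LΓ (β p.1 lam)⁻¹ (RΛ lam p.1), RΔ (c p.2 lam⁻¹) (LΛ lam⁻¹ p.2))) ⁻¹' A)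
            ∩ Y ×ˢ Z ⊆
          symmDiff A ((fun p : S × S' => (RΛ lam p.1, LΛ lam⁻¹ p.2)) ⁻¹' A) ∪
          ⋃ gd : Γ × Δ, (fun p : S × S' => (RΛ lam p.1, LΛ lam⁻¹ p.2)) ⁻¹'
            (symmDiff A ((fun p : S × S' => (LΓ gd.1 p.1, RΔ gd.2 p.2)) ⁻¹' A)) := by
        rintro p ⟨hd, hpW⟩
        rw [Set.mem_symmDiff] at hd
        simp only [Set.mem_preimage] at hd
        by_cases hiff : p ∈ A ↔ (RΛ lam p.1, LΛ lam⁻¹ p.2) ∈ A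
        · right
          refine Set.mem_iUnion.2 ⟨((β p.1 lam)⁻¹, c p.2 lam⁻¹), ?_⟩
          simp only [Set.mem_preimage, Set.mem_symmDiff]
          tauto
        · left
          rw [Set.mem_symmDiff]
          simp only [Set.mem_preimage]
          tauto
      refine le_antisymm ?_ zero_le
      calc μ (symmDiff (A ∩ Y ×ˢ Z) ((fun p : S × S' =>
              (LΓ (β p.1 lam)⁻¹ (RΛ lam p.1), RΔ (c p.2 lam⁻¹) (LΛ lam⁻¹ p.2))) ⁻¹'
                (A ∩ Y ×ˢ Z)) ∩ Y ×ˢ Z)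
          = μ (symmDiff A ((fun p : S × S' =>
              (LΓ (β p.1 lam)⁻¹ (RΛ lam p.1), RΔ (c p.2 lam⁻¹) (LΛ lam⁻¹ p.2))) ⁻¹' A)
              ∩ Y ×ˢ Z) := by rw [hstep1]
        _ ≤ μ (symmDiff A ((fun p : S × S' => (RΛ lam p.1, LΛ lam⁻¹ p.2)) ⁻¹' A) ∪
              ⋃ gd : Γ × Δ, (fun p : S × S' => (RΛ lam p.1, LΛ lam⁻¹ p.2)) ⁻¹'
                (symmDiff A ((fun p : S × S' => (LΓ gd.1 p.1, RΔ gd.2 p.2)) ⁻¹' A))) :=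
            measure_mono hstep2
        _ ≤ μ (symmDiff A ((fun p : S × S' => (RΛ lam p.1, LΛ lam⁻¹ p.2)) ⁻¹' A)) +
              μ (⋃ gd : Γ × Δ, (fun p : S × S' => (RΛ lam p.1, LΛ lam⁻¹ p.2)) ⁻¹'
                (symmDiff A ((fun p : S × S' => (LΓ gd.1 p.1, RΔ gd.2 p.2)) ⁻¹' A))) :=
            measure_union_le _ _
        _ ≤ 0 + ∑' gd : Γ × Δ, μ ((fun p : S × S' => (RΛ lam p.1, LΛ lam⁻¹ p.2)) ⁻¹'
                (symmDiff A ((fun p : S × S' => (LΓ gd.1 p.1, RΔ gd.2 p.2)) ⁻¹' A))) :=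
            add_le_add (le_of_eq (hlinv lam)) (measure_iUnion_le _)
        _ = 0 := by
            rw [zero_add]
            refine ENNReal.tsum_eq_zero.2 fun gd => ?_
            rw [(hTlmp lam).measure_preimage
              (hAm.symmDiff ((hFmp gd.1 gd.2).measurable hAm)).nullMeasurableSet]
            exact hFA gd.1 gd.2
    rcases Erg (A ∩ Y ×ˢ Z) hBm hBinv with h0 | h0
    · left
      refine hAENull A hAm hFA ?_
      rw [hν, Measure.restrict_apply' hWm] at h0
      rwa [Set.inter_assoc, Set.inter_self] at h0
    · right
      have hAc : ∀ (γ : Γ) (δ : Δ),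
          μ (symmDiff Aᶜ ((fun p : S × S' => (LΓ γ p.1, RΔ δ p.2)) ⁻¹' Aᶜ)) = 0 := by
        intro γ δ
        rw [Set.preimage_compl, compl_symmDiff_compl]
        exact hFA γ δ
      refine hAENull Aᶜ hAm.compl hAc ?_
      rw [hν, Measure.restrict_apply' hWm] at h0
      refine measure_mono_null ?_ h0
      rintro p ⟨hpA, hpW⟩
      exact ⟨fun hb => hpA hb.1, hpW⟩
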